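/- Let d ≥ 2 and n ≥ 2d+1. Then σ⁻¹(C_n^d) = d(d+1). -/

import Mathlib

/-- A coloring `f : V → Fin 2` is balanced if its two color class sizes differ by at most 1. -/
def BalancedColoring {V : Type*} (f : V → Fin 2) : Prop :=
  (Nat.card {v | f v = 0} : ℤ) - (Nat.card {v | f v = 1} : ℤ) ≤ 1 ∧
  (Nat.card {v | f v = 1} : ℤ) - (Nat.card {v | f v = 0} : ℤ) ≤ 1

/-- The set `g(f)` of bichromatic edges of `G` under the coloring `f`. -/
def bichromatic {V : Type*} (G : SimpleGraph V) (f : V → Fin 2) : Set (Sym2 V) :=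
  {e | e ∈ G.edgeSet ∧ Sym2.lift ⟨fun a b => f a ≠ f b, fun a b => by simp [ne_comm]⟩ e}

/-- `|g(f)|`, the number of bichromatic edges. -/
noncomputable def mixedCount {V : Type*} (G : SimpleGraph V) (f : V → Fin 2) : ℕ :=
  (bichromatic G f).ncard

/-- The rna number / minimum bisection width `σ⁻¹(G)`. -/
noncomputable def rna {V : Type*} (G : SimpleGraph V) : ℕ :=
  sInf {k | ∃ f : V → Fin 2, BalancedColoring f ∧ mixedCount G f = k}

/-- The `d`-th power of the cycle `C_n`, with vertex set `ZMod n`. -/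
def cyclePow (n d : ℕ) : SimpleGraph (ZMod n) where
  Adj u v := u ≠ v ∧ ∃ j : ℕ, 1 ≤ j ∧ j ≤ d ∧ (v = u + (j : ZMod n) ∨ u = v + (j : ZMod n))
  symm := by
    refine ⟨?_⟩
    rintro u v ⟨h, j, h1, h2, h3⟩
    exact ⟨h.symm, j, h1, h2, h3.symm⟩
  loopless := by refine ⟨?_⟩; rintro u ⟨h, -⟩; exact h rfl

open Finset
namespace Rna
lemma mod2 {a n : ℕ} (h1 : n ≤ a) (h2 : a < 2*n) : a % n = a - n := by
  rw [Nat.mod_eq_sub_mod h1, Nat.mod_eq_of_lt (by omega)]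

def cnt (n : ℕ) (x : ℕ → Bool) (b : Bool) : ℕ :=
  ((Finset.range n).filter (fun i => x i = b)).card

def mp (n d : ℕ) (x : ℕ → Bool) : ℕ :=
  ∑ i ∈ Finset.range n, ∑ t ∈ Finset.range d,
    if x i ≠ x ((i + t + 1) % n) then 1 else 0

lemma sum_shift (n : ℕ) (hn : 0 < n) (F : ℕ → ℕ) :
    ∑ i ∈ Finset.range n, F ((i+1) % n) = ∑ j ∈ Finset.range n, F j := by
  apply Finset.sum_nbij' (i := fun i => (i+1) % n) (j := fun j => (j + (n-1)) % n)
  · intro a ha; simp only [Finset.mem_range] at *; exact Nat.mod_lt _ hn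
  · intro a ha; simp only [Finset.mem_range] at *; exact Nat.mod_lt _ hn
  · intro a ha; simp only [Finset.mem_range] at ha
    rcases Nat.lt_or_ge (a+1) n with h | h
    · rw [Nat.mod_eq_of_lt h, mod2 (by omega) (by omega)]; omega
    · have : a + 1 = n := by omega
      rw [this, Nat.mod_self, Nat.zero_add, Nat.mod_eq_of_lt (by omega)]; omega
  · intro a ha; simp only [Finset.mem_range] at ha
    rcases Nat.lt_or_ge (a + (n-1)) n with h | h
    · rw [Nat.mod_eq_of_lt h]
      have : a + (n-1) + 1 = n := by omega
      rw [this, Nat.mod_self]; omega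
    · rw [mod2 h (by omega)]
      rw [Nat.mod_eq_of_lt (by omega)]; omega
  · intro a ha; rfl

def rot1 (n : ℕ) (x : ℕ → Bool) : ℕ → Bool := fun i => x ((i+1) % n)

lemma mp_rot1 (n d : ℕ) (hn : 0 < n) (x : ℕ → Bool) :
    mp n d (rot1 n x) = mp n d x := by
  unfold mp
  rw [← sum_shift n hn (fun j => ∑ t ∈ Finset.range d, if x j ≠ x ((j + t + 1) % n) then 1 else 0)]
  refine Finset.sum_congr rfl fun i hi => Finset.sum_congr rfl fun t ht => ?_
  simp only [rot1]
  have e1 : ((i + t + 1) % n + 1) % n = ((i + 1) % n + t + 1) % n := by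
    rw [Nat.mod_add_mod, Nat.add_assoc ((i+1) % n), Nat.mod_add_mod]
    congr 1
    omega
  simp only [e1]

lemma cnt_rot1 (n : ℕ) (hn : 0 < n) (x : ℕ → Bool) (b : Bool) :
    cnt n (rot1 n x) b = cnt n x b := by
  unfold cnt
  rw [Finset.card_filter, Finset.card_filter]
  exact sum_shift n hn (fun j => if x j = b then 1 else 0)

lemma rot1_iter (n r : ℕ) (x : ℕ → Bool) (i : ℕ) (hi : i < n) :
    (rot1 n)^[r] x i = x ((i + r) % n) := by
  induction r generalizing x with
  | zero => rw [Function.iterate_zero_apply, Nat.add_zero, Nat.mod_eq_of_lt hi]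
  | succ r ih =>
    rw [Function.iterate_succ_apply, ih (rot1 n x)]
    simp only [rot1]
    rw [Nat.mod_add_mod, Nat.add_assoc]

lemma mp_rot (n d r : ℕ) (hn : 0 < n) (x : ℕ → Bool) :
    mp n d ((rot1 n)^[r] x) = mp n d x := by
  induction r generalizing x with
  | zero => rfl
  | succ r ih => rw [Function.iterate_succ_apply, ih (rot1 n x), mp_rot1 n d hn]

lemma cnt_rot (n r : ℕ) (hn : 0 < n) (x : ℕ → Bool) (b : Bool) :
    cnt n ((rot1 n)^[r] x) b = cnt n x b := by
  induction r generalizing x with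
  | zero => rfl
  | succ r ih => rw [Function.iterate_succ_apply, ih (rot1 n x), cnt_rot1 n hn]

lemma mp_del (m d : ℕ) (x : ℕ → Bool) (hd : 1 ≤ d) (hm : 2*d+1 ≤ m) (hx : x m = true) :
    mp m d x ≤ mp (m+1) d x := by
  set W : ℕ → ℕ → ℕ := fun i j => if x i ≠ x j then 1 else 0 with hW
  set G : ℕ → ℕ → ℕ := fun M i => ∑ t ∈ Finset.range d, W i ((i + t + 1) % M) with hG
  have hmp : ∀ M, mp M d x = ∑ i ∈ Finset.range M, G M i := fun M => rfl
  -- the last row of mp (m+1)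
  have hlast : G (m+1) m = ∑ t ∈ Finset.range d, (if x t = false then 1 else 0) := by
    refine Finset.sum_congr rfl fun t ht => ?_
    simp only [Finset.mem_range] at ht
    have e : (m + t + 1) % (m+1) = t := by
      rw [mod2 (by omega) (by omega)]; omega
    simp only [hW, e, hx]
    cases h : x t <;> simp
  -- split ranges
  have hsplit1 : mp (m+1) d x = (∑ i ∈ Finset.range m, G (m+1) i) + G (m+1) m := by
    rw [hmp, Finset.sum_range_succ]
  have hsplit0 : ∀ M, (∑ i ∈ Finset.range m, G M i)
      = (∑ i ∈ Finset.range (m-d), G M i) + ∑ i ∈ Finset.Ico (m-d) m, G M i := by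
    intro M
    rw [Finset.range_eq_Ico, ← Finset.sum_Ico_consecutive _ (Nat.zero_le (m-d)) (by omega : m - d ≤ m),
      ← Finset.range_eq_Ico]
  -- low part equal
  have hlow : ∀ i ∈ Finset.range (m-d), G m i = G (m+1) i := by
    intro i hi
    simp only [Finset.mem_range] at hi
    refine Finset.sum_congr rfl fun t ht => ?_
    simp only [Finset.mem_range] at ht
    have e1 : (i + t + 1) % m = i + t + 1 := Nat.mod_eq_of_lt (by omega)
    have e2 : (i + t + 1) % (m+1) = i + t + 1 := Nat.mod_eq_of_lt (by omega)
    rw [e1, e2]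
  -- main per-i bound on the high part
  have hmain : ∀ i ∈ Finset.Ico (m-d) m,
      G m i ≤ G (m+1) i + (if x (i - (m-d)) = false then 1 else 0) := by
    intro i hi
    simp only [Finset.mem_Ico] at hi
    set u : ℕ := m - i with hu
    have hu1 : 1 ≤ u := by omega
    have hud : u ≤ d := by omega
    have hGm : G m i = (∑ t ∈ Finset.range (u-1), W i (i+t+1))
        + ∑ v ∈ Finset.range (d-u+1), W i v := by
      simp only [hG]
      rw [Finset.range_eq_Ico, ← Finset.sum_Ico_consecutive _ (Nat.zero_le (u-1)) (by omega : u-1 ≤ d),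
        ← Finset.range_eq_Ico]
      congr 1
      · refine Finset.sum_congr rfl fun t ht => ?_
        simp only [Finset.mem_range] at ht
        have e : (i + t + 1) % m = i + t + 1 := Nat.mod_eq_of_lt (by omega)
        rw [e]
      · rw [Finset.sum_Ico_eq_sum_range]
        have hd' : d - (u-1) = d - u + 1 := by omega
        rw [hd']
        refine Finset.sum_congr rfl fun v hv => ?_
        simp only [Finset.mem_range] at hv
        have e : (i + (u - 1 + v) + 1) % m = v := by
          rw [mod2 (by omega) (by omega)]; omega
        rw [e]
    have hGm1 : G (m+1) i = ((∑ t ∈ Finset.range (u-1), W i (i+t+1))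
        + ∑ v ∈ Finset.range (d-u), W i v) + (if x i ≠ true then 1 else 0) := by
      simp only [hG]
      rw [Finset.range_eq_Ico, ← Finset.sum_Ico_consecutive _ (Nat.zero_le (u-1)) (by omega : u-1 ≤ d),
        ← Finset.range_eq_Ico]
      rw [Nat.add_assoc]
      congr 1
      · refine Finset.sum_congr rfl fun t ht => ?_
        simp only [Finset.mem_range] at ht
        have e : (i + t + 1) % (m+1) = i + t + 1 := Nat.mod_eq_of_lt (by omega)
        rw [e]
      · rw [Finset.sum_Ico_eq_sum_range]
        have hd' : d - (u-1) = (d - u) + 1 := by omega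
        rw [hd', Finset.sum_range_succ']
        congr 1
        · refine Finset.sum_congr rfl fun v hv => ?_
          simp only [Finset.mem_range] at hv
          have e : (i + (u - 1 + (v+1)) + 1) % (m+1) = v := by
            rw [mod2 (by omega) (by omega)]; omega
          rw [e]
        · have e : (i + (u - 1 + 0) + 1) % (m+1) = m := by
            rw [Nat.mod_eq_of_lt (by omega)]; omega
          rw [e]
          simp only [hW, hx]
    have hkey : W i (d-u) ≤ (if x i ≠ true then 1 else 0) + (if x (d-u) = false then 1 else 0) := by
      simp only [hW]
      cases h1 : x i <;> cases h2 : x (d-u) <;> simp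
    have hiu : i - (m-d) = d - u := by omega
    rw [hGm, hGm1, hiu]
    have : ∑ v ∈ Finset.range (d-u+1), W i v = (∑ v ∈ Finset.range (d-u), W i v) + W i (d-u) := by
      rw [Finset.sum_range_succ]
    rw [this]
    omega
  -- assemble
  rw [hmp m, hsplit1, hsplit0 m, hsplit0 (m+1)]
  have hB : ∑ i ∈ Finset.Ico (m-d) m, G m i
      ≤ (∑ i ∈ Finset.Ico (m-d) m, G (m+1) i) + G (m+1) m := by
    have h1 : ∑ i ∈ Finset.Ico (m-d) m, G m i
        ≤ ∑ i ∈ Finset.Ico (m-d) m, (G (m+1) i + (if x (i - (m-d)) = false then 1 else 0)) :=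
      Finset.sum_le_sum hmain
    rw [Finset.sum_add_distrib] at h1
    have h2 : ∑ i ∈ Finset.Ico (m-d) m, (if x (i - (m-d)) = false then 1 else 0)
        = G (m+1) m := by
      rw [hlast, Finset.sum_Ico_eq_sum_range]
      have : m - (m - d) = d := by omega
      rw [this]
      refine Finset.sum_congr rfl fun v hv => ?_
      have : m - d + v - (m - d) = v := by omega
      rw [this]
    omega
  have hA : ∑ i ∈ Finset.range (m-d), G m i = ∑ i ∈ Finset.range (m-d), G (m+1) i :=
    Finset.sum_congr rfl hlow
  omega

lemma cnt_add (n : ℕ) (x : ℕ → Bool) : cnt n x true + cnt n x false = n := by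
  unfold cnt
  have := Finset.card_filter_add_card_filter_not (s := Finset.range n)
    (p := fun i => x i = true)
  simp only [Bool.not_eq_true] at this
  simpa using this

lemma mp_eq_card (n d : ℕ) (x : ℕ → Bool) :
    mp n d x = ((Finset.range n ×ˢ Finset.range d).filter
      (fun p => x p.1 ≠ x ((p.1 + p.2 + 1) % n))).card := by
  rw [Finset.card_filter, Finset.sum_product]
  rfl

lemma diff_spec (n a b : ℕ) (ha : a < n) (hb : b < n) (hab : a ≠ b) :
    1 ≤ (b + n - a) % n ∧ (b + n - a) % n + (a + n - b) % n = n
      ∧ (a + (b + n - a) % n) % n = b := by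
  have hn : 0 < n := by omega
  rcases Nat.lt_or_ge a b with h | h
  · have e1 : (b + n - a) % n = b - a := by rw [mod2 (by omega) (by omega)]; omega
    have e2 : (a + n - b) % n = a + n - b := Nat.mod_eq_of_lt (by omega)
    have e3 : (a + (b - a)) % n = b := by
      have : a + (b - a) = b := by omega
      rw [this, Nat.mod_eq_of_lt hb]
    rw [e1, e2]
    exact ⟨by omega, by omega, e3⟩
  · have hba : b < a := by omega
    have e1 : (b + n - a) % n = b + n - a := Nat.mod_eq_of_lt (by omega)
    have e3 : (a + (b + n - a)) % n = b := by
      have : a + (b + n - a) = b + n := by omega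
      rw [this, mod2 (by omega) (by omega)]; omega
    have e2 : (a + n - b) % n = a - b := by rw [mod2 (by omega) (by omega)]; omega
    rw [e1, e2]
    exact ⟨by omega, by omega, e3⟩

lemma base (d n : ℕ) (x : ℕ → Bool) (hd : 1 ≤ d) (hn : n = 2*d+1)
    (hT : d ≤ cnt n x true) (hF : d ≤ cnt n x false) : d*(d+1) ≤ mp n d x := by
  classical
  set T := (Finset.range n).filter (fun i => x i = true) with hTdef
  set F := (Finset.range n).filter (fun i => x i = false) with hFdef
  have hadd : T.card + F.card = n := cnt_add n x
  set P := (Finset.range n ×ˢ Finset.range d).filter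
      (fun p : ℕ × ℕ => x p.1 ≠ x ((p.1 + p.2 + 1) % n)) with hPdef
  set Φ : ℕ × ℕ → ℕ × ℕ := fun p =>
    if (p.2 + n - p.1) % n ≤ d then (p.1, (p.2 + n - p.1) % n - 1)
    else (p.2, (p.1 + n - p.2) % n - 1) with hPhi
  have hmem : ∀ p ∈ T ×ˢ F, Φ p ∈ P := by
    rintro ⟨a, b⟩ hp
    simp only [Finset.mem_product, hTdef, hFdef, Finset.mem_filter, Finset.mem_range] at hp
    obtain ⟨⟨ha, hxa⟩, hb, hxb⟩ := hp
    have hab : a ≠ b := by intro h; rw [h, hxb] at hxa; exact Bool.noConfusion hxa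
    obtain ⟨he1, he2, he3⟩ := diff_spec n a b ha hb hab
    obtain ⟨hf1, hf2, hf3⟩ := diff_spec n b a hb ha (Ne.symm hab)
    have hf2' : (a + n - b) % n = (b + n - a) % n + (a + n - b) % n - (b + n - a) % n := by omega
    by_cases hc : (b + n - a) % n ≤ d
    · simp only [hPhi, hPdef, if_pos hc, Finset.mem_filter, Finset.mem_product, Finset.mem_range]
      refine ⟨⟨ha, by omega⟩, ?_⟩
      have : a + ((b + n - a) % n - 1) + 1 = a + (b + n - a) % n := by omega
      rw [this, he3, hxa, hxb]
      simp
    · have hc' : (a + n - b) % n ≤ d := by omega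
      simp only [hPhi, hPdef, if_neg hc, Finset.mem_filter, Finset.mem_product, Finset.mem_range]
      refine ⟨⟨hb, by omega⟩, ?_⟩
      have : b + ((a + n - b) % n - 1) + 1 = b + (a + n - b) % n := by omega
      rw [this, hf3, hxa, hxb]
      simp
  have hrecon : ∀ p ∈ T ×ˢ F,
      (if x (Φ p).1 = true then ((Φ p).1, ((Φ p).1 + (Φ p).2 + 1) % n)
       else (((Φ p).1 + (Φ p).2 + 1) % n, (Φ p).1)) = p := by
    rintro ⟨a, b⟩ hp
    simp only [Finset.mem_product, hTdef, hFdef, Finset.mem_filter, Finset.mem_range] at hp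
    obtain ⟨⟨ha, hxa⟩, hb, hxb⟩ := hp
    have hab : a ≠ b := by intro h; rw [h, hxb] at hxa; exact Bool.noConfusion hxa
    obtain ⟨he1, he2, he3⟩ := diff_spec n a b ha hb hab
    obtain ⟨hf1, hf2, hf3⟩ := diff_spec n b a hb ha (Ne.symm hab)
    by_cases hc : (b + n - a) % n ≤ d
    · simp only [hPhi, if_pos hc]
      simp only [hxa, if_pos rfl]
      have : a + ((b + n - a) % n - 1) + 1 = a + (b + n - a) % n := by omega
      rw [this, he3]
      simp
    · simp only [hPhi, if_neg hc]
      simp only [hxb]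
      have : b + ((a + n - b) % n - 1) + 1 = b + (a + n - b) % n := by omega
      rw [this, hf3]
      simp
  have hinj : Set.InjOn Φ ↑(T ×ˢ F) := by
    intro p hp q hq h
    rw [Finset.mem_coe] at hp hq
    rw [← hrecon p hp, ← hrecon q hq, h]
  have hcard : (T ×ˢ F).card ≤ P.card := Finset.card_le_card_of_injOn Φ hmem hinj
  rw [Finset.card_product] at hcard
  rw [mp_eq_card, ← hPdef]
  have : T.card * F.card = d * (d+1) := by
    have h1 : T.card = d ∧ F.card = d + 1 ∨ T.card = d + 1 ∧ F.card = d := by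
      have := hT; have := hF
      simp only [cnt, ← hTdef, ← hFdef] at *
      omega
    rcases h1 with ⟨h1, h2⟩ | ⟨h1, h2⟩ <;> rw [h1, h2] <;> ring
  omega

lemma cnt_succ (m : ℕ) (x : ℕ → Bool) (b : Bool) :
    cnt (m+1) x b = cnt m x b + (if x m = b then 1 else 0) := by
  unfold cnt
  rw [Finset.range_add_one, Finset.filter_insert]
  by_cases h : x m = b
  · rw [if_pos h, if_pos h, Finset.card_insert_of_notMem (by simp)]
  · rw [if_neg h, if_neg h, Nat.add_zero]

lemma exists_true (n : ℕ) (x : ℕ → Bool) (h : 1 ≤ cnt n x true) : ∃ j, j < n ∧ x j = true := by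
  unfold cnt at h
  obtain ⟨j, hj⟩ := Finset.card_pos.mp (Nat.lt_of_lt_of_le Nat.zero_lt_one h)
  simp only [Finset.mem_filter, Finset.mem_range] at hj
  exact ⟨j, hj.1, hj.2⟩

lemma cnt_not (n : ℕ) (x : ℕ → Bool) (b : Bool) : cnt n (fun i => !(x i)) b = cnt n x (!b) := by
  unfold cnt
  congr 1
  apply Finset.filter_congr
  intro i _
  cases h : x i <;> cases b <;> simp_all

lemma mp_not (n d : ℕ) (x : ℕ → Bool) : mp n d (fun i => !(x i)) = mp n d x := by
  unfold mp
  refine Finset.sum_congr rfl fun i _ => Finset.sum_congr rfl fun t _ => ?_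
  congr 1
  simp

lemma step (d k : ℕ) (hd : 1 ≤ d)
    (ih : ∀ x : ℕ → Bool, d ≤ cnt (2*d+1+k) x true → d ≤ cnt (2*d+1+k) x false →
      d*(d+1) ≤ mp (2*d+1+k) d x)
    (x : ℕ → Bool) (h1 : d+1 ≤ cnt (2*d+2+k) x true) (h2 : d ≤ cnt (2*d+2+k) x false) :
    d*(d+1) ≤ mp (2*d+2+k) d x := by
  set n := 2*d+2+k with hn
  have hn0 : 0 < n := by omega
  obtain ⟨j, hj, hxj⟩ := exists_true n x (by omega)
  set r := (j+1) % n with hr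
  set y := (rot1 n)^[r] x with hy
  have hym : y (n-1) = true := by
    rw [hy, rot1_iter n r x (n-1) (by omega), hr]
    rw [Nat.add_comm (n-1) ((j+1) % n), Nat.mod_add_mod]
    rw [show j + 1 + (n-1) = j + n from by omega, mod2 (by omega) (by omega),
      show j + n - n = j from by omega]
    exact hxj
  have hcT : cnt n y true = cnt n x true := cnt_rot n r hn0 x true
  have hcF : cnt n y false = cnt n x false := cnt_rot n r hn0 x false
  have hmpy : mp n d y = mp n d x := mp_rot n d r hn0 x
  have hnm : n = (n-1) + 1 := by omega
  have hdT : cnt ((n-1)+1) y true = cnt (n-1) y true + 1 := by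
    rw [cnt_succ, if_pos hym]
  have hdF : cnt ((n-1)+1) y false = cnt (n-1) y false := by
    rw [cnt_succ, if_neg (by simp [hym]), Nat.add_zero]
  have hT' : d ≤ cnt (n-1) y true := by
    rw [← hnm] at hdT; omega
  have hF' : d ≤ cnt (n-1) y false := by
    rw [← hnm] at hdF; omega
  have hdel : mp (n-1) d y ≤ mp ((n-1)+1) d y :=
    mp_del (n-1) d y hd (by omega) (by
      have : (n-1) = n - 1 := rfl
      rw [this]; exact hym)
  have hIH : d*(d+1) ≤ mp (n-1) d y := by
    have e : n - 1 = 2*d+1+k := by omega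
    rw [e]
    rw [e] at hT' hF'
    exact ih y hT' hF'
  rw [← hnm] at hdel
  omega

theorem key (d n : ℕ) (hd : 1 ≤ d) (hn : 2*d+1 ≤ n) (x : ℕ → Bool)
    (hT : d ≤ cnt n x true) (hF : d ≤ cnt n x false) : d*(d+1) ≤ mp n d x := by
  obtain ⟨k, rfl⟩ : ∃ k, n = 2*d+1+k := ⟨n - (2*d+1), by omega⟩
  clear hn
  induction k generalizing x with
  | zero => exact base d (2*d+1+0) x hd (by omega) hT hF
  | succ k ih =>
    have hsum := cnt_add (2*d+1+(k+1)) x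
    have he : 2*d+1+(k+1) = 2*d+2+k := by omega
    rw [he] at hT hF hsum ⊢
    rcases Nat.lt_or_ge (cnt (2*d+2+k) x true) (d+1) with h | h
    · -- then false count ≥ d+1
      have hF1 : d+1 ≤ cnt (2*d+2+k) x false := by omega
      have := step d k hd (fun z hz1 hz2 => ih z hz1 hz2) (fun i => !(x i))
        (by rw [cnt_not]; simpa using hF1) (by rw [cnt_not]; simpa using hT)
      rw [mp_not] at this
      exact this
    · exact step d k hd (fun z hz1 hz2 => ih z hz1 hz2) x h hF


lemma fin2_ne_iff (a b : Fin 2) : a ≠ b ↔ ((a = 1) ≠ (b = 1)) := by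
  revert a b; decide

lemma bool_ne_decide (p q : Prop) [Decidable p] [Decidable q] :
    (decide p ≠ decide q) ↔ (p ≠ q) := by
  by_cases hp : p <;> by_cases hq : q <;> simp [hp, hq]

lemma bridge (n d : ℕ) (hn : 2*d+1 ≤ n) (f : ZMod n → Fin 2) :
    mixedCount (cyclePow n d) f = mp n d (fun i => decide (f (i : ZMod n) = 1)) := by
  haveI : NeZero n := ⟨by omega⟩
  set x : ℕ → Bool := fun i => decide (f (i : ZMod n) = 1) with hx
  set P := ((Finset.range n ×ˢ Finset.range d).filter
      (fun p => x p.1 ≠ x ((p.1 + p.2 + 1) % n))) with hP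
  set F : ℕ × ℕ → Sym2 (ZMod n) :=
    fun p => s((p.1 : ZMod n), (p.1 : ZMod n) + ((p.2 + 1 : ℕ) : ZMod n)) with hF
  have hcond : ∀ p : ℕ × ℕ, (x p.1 ≠ x ((p.1 + p.2 + 1) % n)) ↔
      f (p.1 : ZMod n) ≠ f ((p.1 : ZMod n) + ((p.2 + 1 : ℕ) : ZMod n)) := by
    intro p
    have e : (((p.1 + p.2 + 1) % n : ℕ) : ZMod n)
        = (p.1 : ZMod n) + ((p.2 + 1 : ℕ) : ZMod n) := by
      rw [ZMod.natCast_mod]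
      push_cast
      ring
    rw [hx]
    simp only [bool_ne_decide, e]
    exact (fin2_ne_iff _ _).symm
  have him : ∀ p ∈ P, F p ∈ bichromatic (cyclePow n d) f := by
    rintro ⟨i, t⟩ hp
    rw [hP, Finset.mem_filter, Finset.mem_product, Finset.mem_range, Finset.mem_range] at hp
    obtain ⟨⟨hi, ht⟩, hc⟩ := hp
    have hfab := (hcond (i, t)).mp hc
    constructor
    · rw [SimpleGraph.mem_edgeSet]
      refine ⟨fun h => hfab (by rw [← h]), t+1, by omega, by omega, Or.inl rfl⟩
    · rw [hF]
      simp only [Sym2.lift_mk]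
      exact hfab
  have hsurj : ∀ e ∈ bichromatic (cyclePow n d) f, ∃ p ∈ P, F p = e := by
    intro e he
    induction e with
    | _ u v =>
      obtain ⟨hedge, hlift⟩ := he
      rw [SimpleGraph.mem_edgeSet] at hedge
      simp only [Sym2.lift_mk] at hlift
      obtain ⟨hne, j, hj1, hj2, hor⟩ := hedge
      rcases hor with h | h
      · refine ⟨(u.val, j-1), ?_, ?_⟩
        · rw [hP, Finset.mem_filter, Finset.mem_product, Finset.mem_range, Finset.mem_range]
          refine ⟨⟨ZMod.val_lt u, by omega⟩, ?_⟩
          rw [hcond]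
          simp only [ZMod.natCast_zmod_val]
          rw [show j - 1 + 1 = j from by omega, ← h]
          exact hlift
        · rw [hF]
          simp only [ZMod.natCast_zmod_val]
          rw [show j - 1 + 1 = j from by omega, ← h]
      · refine ⟨(v.val, j-1), ?_, ?_⟩
        · rw [hP, Finset.mem_filter, Finset.mem_product, Finset.mem_range, Finset.mem_range]
          refine ⟨⟨ZMod.val_lt v, by omega⟩, ?_⟩
          rw [hcond]
          simp only [ZMod.natCast_zmod_val]
          rw [show j - 1 + 1 = j from by omega, ← h]
          exact hlift.symm
        · rw [hF]
          simp only [ZMod.natCast_zmod_val]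
          rw [show j - 1 + 1 = j from by omega, ← h]
          exact Sym2.eq_swap
  have hinj : Set.InjOn F ↑P := by
    rintro ⟨i, t⟩ hp ⟨i', t'⟩ hq h
    rw [Finset.mem_coe, hP, Finset.mem_filter, Finset.mem_product,
      Finset.mem_range, Finset.mem_range] at hp hq
    obtain ⟨⟨hi, ht⟩, -⟩ := hp
    obtain ⟨⟨hi', ht'⟩, -⟩ := hq
    rw [hF] at h
    simp only [Sym2.eq_iff] at h
    rcases h with ⟨h1, h2⟩ | ⟨h1, h2⟩
    · have hii : i = i' := by
        have := congrArg ZMod.val h1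
        rwa [ZMod.val_cast_of_lt hi, ZMod.val_cast_of_lt hi'] at this
      subst hii
      have h3 : ((t + 1 : ℕ) : ZMod n) = ((t' + 1 : ℕ) : ZMod n) := add_left_cancel h2
      have h4 : t + 1 = t' + 1 := by
        have := congrArg ZMod.val h3
        rwa [ZMod.val_cast_of_lt (by omega), ZMod.val_cast_of_lt (by omega)] at this
      have h5 : t = t' := by omega
      rw [h5]
    · exfalso
      have h3 : (i : ZMod n) + ((t + 1 : ℕ) : ZMod n) + ((t' + 1 : ℕ) : ZMod n)
          = (i : ZMod n) := by rw [h2, ← h1]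
      have h4 : ((t + 1 + (t' + 1) : ℕ) : ZMod n) = 0 := by
        push_cast at h3 ⊢
        linear_combination h3
      rw [ZMod.natCast_eq_zero_iff] at h4
      have := Nat.le_of_dvd (by omega) h4
      omega
  have hseteq : bichromatic (cyclePow n d) f = ↑(P.image F) := by
    ext e
    simp only [Finset.coe_image, Set.mem_image, Finset.mem_coe]
    constructor
    · intro he
      obtain ⟨p, hp, hpe⟩ := hsurj e he
      exact ⟨p, hp, hpe⟩
    · rintro ⟨p, hp, rfl⟩
      exact him p hp
  rw [mixedCount, hseteq, Set.ncard_coe_finset, Finset.card_image_of_injOn hinj, mp_eq_card]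


lemma card_filter_zmod (n : ℕ) [NeZero n] (p : ZMod n → Prop) [DecidablePred p] :
    ((Finset.range n).filter (fun (i : ℕ) => p ((i : ℕ) : ZMod n))).card
      = (Finset.univ.filter p).card := by
  apply Finset.card_nbij' (i := fun (i : ℕ) => ((i : ℕ) : ZMod n)) (j := fun (v : ZMod n) => ZMod.val v)
  · intro a ha
    simp only [Finset.mem_coe, Finset.mem_filter, Finset.mem_range] at ha
    simp [ha.2]
  · intro v hv
    simp only [Finset.mem_coe, Finset.mem_filter, Finset.mem_univ, true_and] at hv
    simp only [Finset.mem_coe, Finset.mem_filter, Finset.mem_range]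
    exact ⟨ZMod.val_lt v, by rwa [ZMod.natCast_zmod_val]⟩
  · intro a ha
    simp only [Finset.mem_coe, Finset.mem_filter, Finset.mem_range] at ha
    exact ZMod.val_cast_of_lt ha.1
  · intro v hv
    exact ZMod.natCast_zmod_val v

lemma natCard_set_eq (n : ℕ) [NeZero n] (p : ZMod n → Prop) [DecidablePred p] :
    Nat.card {v | p v} = (Finset.univ.filter p).card := by
  rw [Nat.card_eq_fintype_card]
  exact Fintype.card_subtype p

lemma fin2_eq_zero_iff (a : Fin 2) : a = 0 ↔ ¬ (a = 1) := by revert a; decide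

lemma cnt_classes (n : ℕ) [NeZero n] (f : ZMod n → Fin 2) :
    cnt n (fun i => decide (f (i : ZMod n) = 1)) true = Nat.card {v | f v = 1}
    ∧ cnt n (fun i => decide (f (i : ZMod n) = 1)) false = Nat.card {v | f v = 0} := by
  constructor
  · rw [natCard_set_eq n (fun v => f v = 1), cnt, ← card_filter_zmod n (fun v => f v = 1)]
    congr 1
    apply Finset.filter_congr
    intro i _
    simp
  · rw [natCard_set_eq n (fun v => f v = 0), cnt, ← card_filter_zmod n (fun v => f v = 0)]
    congr 1
    apply Finset.filter_congr
    intro i _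
    simp [fin2_eq_zero_iff]


lemma mp_congr (n d : ℕ) (x y : ℕ → Bool) (h : ∀ i < n, x i = y i) :
    mp n d x = mp n d y := by
  have hn : 0 < n ∨ n = 0 := by omega
  rcases hn with hn | rfl
  · refine Finset.sum_congr rfl fun i hi => Finset.sum_congr rfl fun t ht => ?_
    simp only [Finset.mem_range] at hi ht
    rw [h i hi, h ((i+t+1) % n) (Nat.mod_lt _ hn)]
  · rfl

lemma gauss (d : ℕ) : ∑ t ∈ Finset.range d, 2*(t+1) = d*(d+1) := by
  induction d with
  | zero => simp
  | succ k ih => rw [Finset.sum_range_succ, ih]; ring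

lemma arc_count (n d : ℕ) (hd : 1 ≤ d) (hn : 2*d+1 ≤ n) :
    mp n d (fun i => decide ((n+1)/2 ≤ i)) = d*(d+1) := by
  set m := (n+1)/2 with hm
  have hm1 : d ≤ m := by omega
  have hm2 : m + d ≤ n := by omega
  rw [mp, Finset.sum_comm, ← gauss d]
  refine Finset.sum_congr rfl fun t ht => ?_
  simp only [Finset.mem_range] at ht
  set s := t + 1 with hs
  have hs1 : 1 ≤ s := by omega
  have hs2 : s ≤ d := by omega
  have hcard : (∑ i ∈ Finset.range n,
      if (decide (m ≤ i) : Bool) ≠ decide (m ≤ (i + t + 1) % n) then 1 else 0)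
      = ((Finset.range n).filter
        (fun i => (decide (m ≤ i) : Bool) ≠ decide (m ≤ (i + t + 1) % n))).card :=
    (Finset.card_filter _ _).symm
  rw [hcard]
  have hset : ((Finset.range n).filter
      (fun i => (decide (m ≤ i) : Bool) ≠ decide (m ≤ (i + t + 1) % n)))
      = Finset.Ico (m - s) m ∪ Finset.Ico (n - s) n := by
    ext i
    simp only [Finset.mem_filter, Finset.mem_range, Finset.mem_union, Finset.mem_Ico]
    constructor
    · rintro ⟨hi, hne⟩
      rw [bool_ne_decide, ne_eq, eq_iff_iff] at hne
      rcases Nat.lt_or_ge (i + s) n with h | h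
      · rw [show i + t + 1 = i + s from by omega, Nat.mod_eq_of_lt h] at hne
        omega
      · rw [show i + t + 1 = i + s from by omega, mod2 h (by omega)] at hne
        omega
    · intro h
      have hi : i < n := by omega
      refine ⟨hi, ?_⟩
      rw [bool_ne_decide, ne_eq, eq_iff_iff]
      rcases Nat.lt_or_ge (i + s) n with h' | h'
      · rw [show i + t + 1 = i + s from by omega, Nat.mod_eq_of_lt h']
        omega
      · rw [show i + t + 1 = i + s from by omega, mod2 h' (by omega)]
        omega
  rw [hset, Finset.card_union_of_disjoint, Nat.card_Ico, Nat.card_Ico]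
  · omega
  · rw [Finset.disjoint_left]
    intro a ha hb
    simp only [Finset.mem_Ico] at ha hb
    omega


end Rna

namespace Rna

def fArc (n : ℕ) : ZMod n → Fin 2 := fun v => if v.val < (n+1)/2 then 0 else 1

lemma fArc_classes (n : ℕ) [NeZero n] :
    (Finset.univ.filter (fun v => fArc n v = 0)).card = (n+1)/2 ∧
    (Finset.univ.filter (fun v => fArc n v = 1)).card = n - (n+1)/2 := by
  have hn : 0 < n := Nat.pos_of_ne_zero (NeZero.ne n)
  have hm : (n+1)/2 ≤ n := by omega
  constructor
  · rw [← card_filter_zmod n (fun v => fArc n v = 0)]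
    have : ((Finset.range n).filter (fun (i : ℕ) => fArc n ((i : ℕ) : ZMod n) = 0))
        = Finset.range ((n+1)/2) := by
      ext i
      simp only [Finset.mem_filter, Finset.mem_range]
      constructor
      · rintro ⟨hi, hv⟩
        simp only [fArc, ZMod.val_cast_of_lt hi] at hv
        by_contra hc
        rw [if_neg (by omega)] at hv
        exact absurd hv (by decide)
      · intro hi
        refine ⟨by omega, ?_⟩
        simp only [fArc, ZMod.val_cast_of_lt (by omega : i < n)]
        rw [if_pos hi]
    rw [this, Finset.card_range]
  · rw [← card_filter_zmod n (fun v => fArc n v = 1)]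
    have : ((Finset.range n).filter (fun (i : ℕ) => fArc n ((i : ℕ) : ZMod n) = 1))
        = Finset.Ico ((n+1)/2) n := by
      ext i
      simp only [Finset.mem_filter, Finset.mem_range, Finset.mem_Ico]
      constructor
      · rintro ⟨hi, hv⟩
        simp only [fArc, ZMod.val_cast_of_lt hi] at hv
        by_contra hc
        rw [if_pos (by omega)] at hv
        exact absurd hv (by decide)
      · intro hi
        refine ⟨by omega, ?_⟩
        simp only [fArc, ZMod.val_cast_of_lt (by omega : i < n)]
        rw [if_neg (by omega)]
    rw [this, Nat.card_Ico]

lemma fArc_balanced (n : ℕ) [NeZero n] : BalancedColoring (fArc n) := by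
  have hn : 0 < n := Nat.pos_of_ne_zero (NeZero.ne n)
  obtain ⟨h0, h1⟩ := fArc_classes n
  constructor
  · rw [natCard_set_eq n (fun v => fArc n v = 0), natCard_set_eq n (fun v => fArc n v = 1),
      h0, h1]
    omega
  · rw [natCard_set_eq n (fun v => fArc n v = 0), natCard_set_eq n (fun v => fArc n v = 1),
      h0, h1]
    omega

lemma fArc_x (n : ℕ) [NeZero n] : ∀ i < n,
    (decide (fArc n ((i : ℕ) : ZMod n) = 1) : Bool) = decide ((n+1)/2 ≤ i) := by
  intro i hi
  rw [decide_eq_decide]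
  simp only [fArc, ZMod.val_cast_of_lt hi]
  split_ifs with h
  · constructor
    · intro hv; exact absurd hv (by decide)
    · omega
  · constructor
    · intro _; omega
    · intro _; rfl

lemma fArc_mixed (n d : ℕ) (hd : 1 ≤ d) (hn : 2*d+1 ≤ n) :
    mixedCount (cyclePow n d) (fArc n) = d*(d+1) := by
  haveI : NeZero n := ⟨by omega⟩
  rw [bridge n d hn (fArc n)]
  rw [mp_congr n d _ (fun i => decide ((n+1)/2 ≤ i)) (fArc_x n)]
  exact arc_count n d hd hn

lemma lower_bound (n d : ℕ) (hd : 1 ≤ d) (hn : 2*d+1 ≤ n) (f : ZMod n → Fin 2)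
    (hb : BalancedColoring f) : d*(d+1) ≤ mixedCount (cyclePow n d) f := by
  haveI : NeZero n := ⟨by omega⟩
  rw [bridge n d hn f]
  obtain ⟨hc1, hc0⟩ := cnt_classes n f
  have hsum := cnt_add n (fun i => decide (f (i : ZMod n) = 1))
  obtain ⟨hb1, hb2⟩ := hb
  rw [← hc0, ← hc1] at hb1 hb2
  exact key d n hd hn _ (by omega) (by omega)

end Rna

theorem stmt4 (d n : ℕ) (hd : 2 ≤ d) (hn : 2 * d + 1 ≤ n) :
    rna (cyclePow n d) = d * (d + 1) := by
  haveI : NeZero n := ⟨by omega⟩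
  have hd1 : 1 ≤ d := by omega
  have hmem : d * (d+1) ∈ {k | ∃ f : ZMod n → Fin 2, BalancedColoring f ∧
      mixedCount (cyclePow n d) f = k} :=
    ⟨Rna.fArc n, Rna.fArc_balanced n, Rna.fArc_mixed n d hd1 hn⟩
  apply le_antisymm
  · exact Nat.sInf_le hmem
  · apply le_csInf ⟨_, hmem⟩
    rintro k ⟨f, hb, rfl⟩
    exact Rna.lower_bound n d hd1 hn f hb
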